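/- Let n ≥ 2, let F be a finite field, let α ≥ 1 and C ≥ 1 be reals, and let R ⊆ F be a nonempty set of slopes with −1 ∉ R. Suppose the sums-differences hypothesis SD(R, α) holds with constant C: for every G ⊆ F^{n−1} × F^{n−1} on which the map (a, b) ↦ a − b is injective, one has |G| ≤ C · max_{r∈R} |{a + r·b : (a, b) ∈ G}|^α. Then every Besicovitch set E ⊆ F^n satisfies |E| ≥ c |F|^{(n−1)/α + 1}, where c > 0 is a constant depending only on n, α, C and |R|. -/

import Mathlib

open scoped BigOperators

/-- The line `l(x₀, v) = {(x₀ + t v, t) : t ∈ F} ⊆ F^m × F`. -/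
def lineSet {F : Type*} [Field F] {m : ℕ} (x₀ v : Fin m → F) : Set ((Fin m → F) × F) :=
  {p | ∃ t : F, p = (x₀ + t • v, t)}

/-- A Besicovitch set in `F^m × F = F^{m+1}`: a set containing a line in every direction. -/
def IsBesicovitch {F : Type*} [Field F] {m : ℕ} (E : Set ((Fin m → F) × F)) : Prop :=
  ∀ v : Fin m → F, ∃ x₀ : Fin m → F, lineSet x₀ v ⊆ E

/-- The sums-differences hypothesis `SD(R, α)` (with constant `C`) implies that Besicovitch
sets in `F^n` (here `n = m + 1 ≥ 2`) have cardinality `≳ |F|^{(n-1)/α + 1}`. -/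
theorem statement16 (m : ℕ) (hm : 1 ≤ m) (α : ℝ) (hα : 1 ≤ α) (C : ℝ) (hC : 1 ≤ C) (k : ℕ) :
    ∃ c : ℝ, 0 < c ∧ ∀ (F : Type) [Field F] [Fintype F] [DecidableEq F],
      ∀ R : Finset F, R.Nonempty → (-1 : F) ∉ R → R.card = k →
      (∀ G : Finset ((Fin m → F) × (Fin m → F)),
        Set.InjOn (fun ab : (Fin m → F) × (Fin m → F) => ab.1 - ab.2) ↑G →
        ∃ r ∈ R, (G.card : ℝ) ≤
          C * ((G.image (fun ab : (Fin m → F) × (Fin m → F) => ab.1 + r • ab.2)).card : ℝ) ^ α) →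
      ∀ E : Set ((Fin m → F) × F), IsBesicovitch E →
        c * (Fintype.card F : ℝ) ^ ((m : ℝ) / α + 1) ≤ Nat.card E := by
  classical
  have hα0 : (0:ℝ) < α := lt_of_lt_of_le one_pos hα
  have hC0 : (0:ℝ) < C := lt_of_lt_of_le one_pos hC
  refine ⟨1 / (2 * (k+1) * C), by positivity, ?_⟩
  intro F _ _ _ R hRne hRm1 hRk hSD E hE
  choose x₀ hx₀ using hE
  set q : ℕ := Fintype.card F with hq
  have hq2 : 2 ≤ q := Fintype.one_lt_card
  have hq0 : 0 < q := by omega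
  have hqR : (0:ℝ) < (q:ℝ) := by exact_mod_cast hq0
  have hk1 : 1 ≤ k := hRk ▸ Finset.card_pos.mpr hRne
  -- slices of E
  set slice : F → Finset (Fin m → F) :=
    fun u => Finset.univ.filter (fun x => ((x, u) : (Fin m → F) × F) ∈ E) with hslice
  have hslice_mem : ∀ u x, x ∈ slice u ↔ ((x, u) : (Fin m → F) × F) ∈ E := by
    intro u x; simp [hslice]
  have hr1ne : ∀ r ∈ R, (1 : F) + r ≠ 0 := by
    intro r hr h
    have hr' : r = -1 := by linear_combination h
    exact hRm1 (hr' ▸ hr)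
  -- key estimate for each pair of distinct heights
  have key : ∀ s₁ s₂ : F, s₁ ≠ s₂ → ∃ r, r ∈ R ∧
      ((q : ℝ) ^ m ≤ C * ((slice ((s₁ + r * s₂) / (1 + r))).card : ℝ) ^ α) := by
    intro s₁ s₂ hne
    set f : (Fin m → F) → ((Fin m → F) × (Fin m → F)) :=
      fun v => (x₀ v + s₁ • v, x₀ v + s₂ • v) with hf
    have hfinj : Function.Injective f := by
      intro v w hvw
      have h1 : x₀ v + s₁ • v = x₀ w + s₁ • w := congrArg Prod.fst hvw
      have h2 : x₀ v + s₂ • v = x₀ w + s₂ • w := congrArg Prod.snd hvw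
      have h3 : (s₁ - s₂) • v = (s₁ - s₂) • w := by
        have h4 := congrArg₂ (· - ·) h1 h2
        simp only [add_sub_add_left_eq_sub, ← sub_smul] at h4
        exact h4
      exact smul_right_injective _ (sub_ne_zero.mpr hne) h3
    set G : Finset ((Fin m → F) × (Fin m → F)) := Finset.univ.image f with hG
    have hmemG : ∀ p, p ∈ G ↔ ∃ v, f v = p := by
      intro p; simp [hG]
    have hGcard : G.card = q ^ m := by
      rw [hG, Finset.card_image_of_injective _ hfinj, Finset.card_univ]
      simp [hq, Fintype.card_fun]
    have hGinj : Set.InjOn (fun ab : (Fin m → F) × (Fin m → F) => ab.1 - ab.2) ↑G := by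
      intro a ha b hb hab
      obtain ⟨v, rfl⟩ := (hmemG a).mp (by exact_mod_cast ha)
      obtain ⟨w, rfl⟩ := (hmemG b).mp (by exact_mod_cast hb)
      have : (s₁ - s₂) • v = (s₁ - s₂) • w := by
        simpa [hf, add_sub_add_left_eq_sub, ← sub_smul] using hab
      rw [smul_right_injective (Fin m → F) (sub_ne_zero.mpr hne) this]
    obtain ⟨r, hrR, hbound⟩ := hSD G hGinj
    have hr1 : (1 : F) + r ≠ 0 := hr1ne r hrR
    refine ⟨r, hrR, ?_⟩
    set u : F := (s₁ + r * s₂) / (1 + r) with hu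
    have himg : (G.image (fun ab : (Fin m → F) × (Fin m → F) => ab.1 + r • ab.2)).card
        ≤ (slice u).card := by
      apply Finset.card_le_card_of_injOn (fun y => (1 + r)⁻¹ • y)
      · intro y hy
        obtain ⟨p, hp, rfl⟩ := Finset.mem_image.mp hy
        obtain ⟨v, rfl⟩ := (hmemG p).mp hp
        have hy2 : (x₀ v + s₁ • v) + r • (x₀ v + s₂ • v) = (1 + r) • (x₀ v + u • v) := by
          rw [hu]; match_scalars <;> field_simp
        rw [Finset.mem_coe, hslice_mem]
        have : (1 + r)⁻¹ • ((x₀ v + s₁ • v) + r • (x₀ v + s₂ • v)) = x₀ v + u • v := by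
          rw [hy2, inv_smul_smul₀ hr1]
        simp only [hf] at this ⊢
        rw [this]
        exact hx₀ v ⟨u, rfl⟩
      · intro a _ b _ hab
        exact smul_right_injective _ (inv_ne_zero hr1) hab
    calc ((q:ℝ)) ^ m = (G.card : ℝ) := by rw [hGcard]; push_cast; ring
      _ ≤ C * ((G.image (fun ab : (Fin m → F) × (Fin m → F) => ab.1 + r • ab.2)).card : ℝ) ^ α :=
          hbound
      _ ≤ C * ((slice u).card : ℝ) ^ α := by
          have h' : ((G.image (fun ab : (Fin m → F) × (Fin m → F) => ab.1 + r • ab.2)).card : ℝ)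
              ≤ ((slice u).card : ℝ) := by exact_mod_cast himg
          exact mul_le_mul_of_nonneg_left
            (Real.rpow_le_rpow (by positivity) h' (le_of_lt hα0)) (le_of_lt hC0)
  -- the set of "big" heights
  set U : Finset F := Finset.univ.filter
    (fun u => (q:ℝ)^m ≤ C * ((slice u).card : ℝ)^α) with hU
  -- counting: many heights are big
  have hUcard : q ≤ 2 * (k+1) * U.card := by
    set sel : F × F → F := fun p =>
      if h : p.1 ≠ p.2 then (key p.1 p.2 h).choose else 0 with hsel
    have hselspec : ∀ p : F × F, p.1 ≠ p.2 → sel p ∈ R ∧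
        ((q : ℝ) ^ m ≤ C * ((slice ((p.1 + sel p * p.2) / (1 + sel p))).card : ℝ) ^ α) := by
      intro p h
      have := (key p.1 p.2 h).choose_spec
      simp only [hsel, dif_pos h]
      exact this
    have hP' : ∀ p : F × F, p ∈ Finset.univ.filter (fun p : F × F => p.1 ≠ p.2) ↔ p.1 ≠ p.2 := by
      intro p; simp
    have hmaps : ∀ p ∈ Finset.univ.filter (fun p : F × F => p.1 ≠ p.2),
        (fun p : F × F => ((sel p, (p.1 + sel p * p.2) / (1 + sel p)) : F × F)) p ∈ R ×ˢ U := by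
      intro p hp
      have hne : p.1 ≠ p.2 := (hP' p).mp hp
      obtain ⟨h1, h2⟩ := hselspec p hne
      refine Finset.mem_product.mpr ⟨h1, ?_⟩
      rw [hU, Finset.mem_filter]
      exact ⟨Finset.mem_univ _, h2⟩
    have hfiber : ∀ b ∈ R ×ˢ U,
        ((Finset.univ.filter (fun p : F × F => p.1 ≠ p.2)).filter
          (fun p => (fun p : F × F => ((sel p, (p.1 + sel p * p.2) / (1 + sel p)) : F × F)) p = b)).card
          ≤ q := by
      intro b hb
      have hbR : b.1 ∈ R := (Finset.mem_product.mp hb).1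
      have hb1 : (1 : F) + b.1 ≠ 0 := hr1ne b.1 hbR
      have hle : ((Finset.univ.filter (fun p : F × F => p.1 ≠ p.2)).filter
          (fun p => ((sel p, (p.1 + sel p * p.2) / (1 + sel p)) : F × F) = b)).card
          ≤ (Finset.univ : Finset F).card := by
        apply Finset.card_le_card_of_injOn (fun p => p.2) (fun _ _ => Finset.mem_univ _)
        intro p hp p' hp' hpp
        have hp1 := Finset.mem_filter.mp (by exact_mod_cast hp)
        have hp1' := Finset.mem_filter.mp (by exact_mod_cast hp')
        have e1 : ((sel p, (p.1 + sel p * p.2) / (1 + sel p)) : F × F) = b := hp1.2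
        have e1' : ((sel p', (p'.1 + sel p' * p'.2) / (1 + sel p')) : F × F) = b := hp1'.2
        have hs : sel p = b.1 := congrArg Prod.fst e1
        have hs' : sel p' = b.1 := congrArg Prod.fst e1'
        have hd : (p.1 + sel p * p.2) / (1 + sel p) = b.2 := congrArg Prod.snd e1
        have hd' : (p'.1 + sel p' * p'.2) / (1 + sel p') = b.2 := congrArg Prod.snd e1'
        rw [hs] at hd
        rw [hs'] at hd'
        have h1 : p.1 = (1 + b.1) * b.2 - b.1 * p.2 := by
          field_simp at hd; linear_combination hd
        have h1' : p'.1 = (1 + b.1) * b.2 - b.1 * p'.2 := by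
          field_simp at hd'; linear_combination hd'
        have hpp2 : p.2 = p'.2 := hpp
        have heq : p.1 = p'.1 := by rw [h1, h1', hpp2]
        exact Prod.ext heq hpp2
      simpa [hq] using hle
    have hPle : (Finset.univ.filter (fun p : F × F => p.1 ≠ p.2)).card ≤ q * (R ×ˢ U).card :=
      Finset.card_le_mul_card_image_of_maps_to hmaps q hfiber
    have hdiag : (Finset.univ.filter (fun p : F × F => ¬ p.1 ≠ p.2)).card ≤ q := by
      have hle : (Finset.univ.filter (fun p : F × F => ¬ p.1 ≠ p.2)).card
          ≤ (Finset.univ : Finset F).card := by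
        apply Finset.card_le_card_of_injOn (fun p => p.1) (fun _ _ => Finset.mem_univ _)
        intro p hp p' hp' hpp
        have h2 : p.1 = p.2 := by
          have := (Finset.mem_filter.mp (by exact_mod_cast hp)).2
          exact not_not.mp this
        have h2' : p'.1 = p'.2 := by
          have := (Finset.mem_filter.mp (by exact_mod_cast hp')).2
          exact not_not.mp this
        have hpp2 : p.1 = p'.1 := hpp
        exact Prod.ext hpp2 (by rw [← h2, ← h2', hpp2])
      simpa [hq] using hle
    have htot : (Finset.univ.filter (fun p : F × F => p.1 ≠ p.2)).card
        + (Finset.univ.filter (fun p : F × F => ¬ p.1 ≠ p.2)).card = q * q := by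
      rw [Finset.card_filter_add_card_filter_not]
      simp [hq, Fintype.card_prod]
    have hprod : (R ×ˢ U).card = k * U.card := by
      rw [Finset.card_product, hRk]
    rw [hprod] at hPle
    have h6 : q - 1 ≤ k * U.card := by
      have h5 : q * (q - 1) ≤ q * (k * U.card) := by
        have : q * q - q = q * (q - 1) := by
          cases q with
          | zero => rfl
          | succ n => rw [Nat.succ_sub_one, Nat.mul_succ, Nat.add_sub_cancel]
        omega
      exact Nat.le_of_mul_le_mul_left h5 hq0
    have h7 : q ≤ 2 * k * U.card := by
      calc q ≤ 2 * (q - 1) := by omega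
        _ ≤ 2 * (k * U.card) := Nat.mul_le_mul (le_refl 2) h6
        _ = 2 * k * U.card := by ring
    calc q ≤ 2 * k * U.card := h7
      _ ≤ 2 * (k + 1) * U.card := Nat.mul_le_mul (by omega) (le_refl U.card)
  -- assemble the lower bound on |E|
  set T : Finset ((Fin m → F) × F) :=
    U.biUnion (fun u => (slice u).image (fun x => (x, u))) with hT
  have hTcard : T.card = ∑ u ∈ U, (slice u).card := by
    rw [hT, Finset.card_biUnion]
    · refine Finset.sum_congr rfl (fun u _ => ?_)
      apply Finset.card_image_of_injective
      intro a b hab; exact (Prod.ext_iff.mp hab).1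
    · intro u hu u' hu' huu
      simp only [Finset.disjoint_left]
      intro p hp hp'
      obtain ⟨a, -, rfl⟩ := Finset.mem_image.mp hp
      obtain ⟨b, -, hb⟩ := Finset.mem_image.mp hp'
      exact huu (congrArg Prod.snd hb.symm)
  have hTE : (T.card : ℝ) ≤ (Nat.card E : ℝ) := by
    have hfin : E.Finite := Set.toFinite E
    have hsub : T ⊆ hfin.toFinset := by
      intro p hp
      obtain ⟨u, _, hp2⟩ := Finset.mem_biUnion.mp hp
      obtain ⟨x, hx, rfl⟩ := Finset.mem_image.mp hp2
      exact hfin.mem_toFinset.mpr ((hslice_mem u x).mp hx)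
    have := Finset.card_le_card hsub
    rw [Nat.card_coe_set_eq, Set.ncard_eq_toFinset_card _ hfin]
    exact_mod_cast this
  -- each big slice has ≥ q^{m/α}/C points
  have hB : ∀ u ∈ U, (q:ℝ) ^ ((m:ℝ)/α) ≤ C * ((slice u).card : ℝ) := by
    intro u hu
    have hu2 : (q:ℝ)^m ≤ C * ((slice u).card : ℝ)^α := by
      simpa [hU] using hu
    set x : ℝ := ((slice u).card : ℝ) with hx
    have hx0 : 0 ≤ x := Nat.cast_nonneg _
    have step1 : C * x ^ α ≤ (C * x) ^ α := by
      rw [Real.mul_rpow (le_of_lt hC0) hx0]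
      apply mul_le_mul_of_nonneg_right _ (Real.rpow_nonneg hx0 α)
      calc C = C ^ (1:ℝ) := (Real.rpow_one C).symm
        _ ≤ C ^ α := Real.rpow_le_rpow_of_exponent_le hC hα
    have step2 : (q:ℝ)^m ≤ (C * x) ^ α := le_trans hu2 step1
    have step3 : ((q:ℝ)^m) ^ (1/α) ≤ ((C * x) ^ α) ^ (1/α) :=
      Real.rpow_le_rpow (by positivity) step2 (by positivity)
    have lhs : ((q:ℝ)^m) ^ (1/α) = (q:ℝ) ^ ((m:ℝ)/α) := by
      rw [← Real.rpow_natCast (q:ℝ) m, ← Real.rpow_mul (le_of_lt hqR)]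
      ring_nf
    have rhs : ((C * x) ^ α) ^ (1/α) = C * x := by
      rw [← Real.rpow_mul (by positivity), mul_one_div, div_self (ne_of_gt hα0),
        Real.rpow_one]
    rw [lhs, rhs] at step3
    exact step3
  have hsum : (U.card : ℝ) * ((q:ℝ) ^ ((m:ℝ)/α) / C) ≤ ∑ u ∈ U, ((slice u).card : ℝ) := by
    calc (U.card : ℝ) * ((q:ℝ) ^ ((m:ℝ)/α) / C)
        = ∑ _u ∈ U, (q:ℝ) ^ ((m:ℝ)/α) / C := by rw [Finset.sum_const, nsmul_eq_mul]
      _ ≤ ∑ u ∈ U, ((slice u).card : ℝ) := by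
          apply Finset.sum_le_sum
          intro u hu
          rw [div_le_iff₀ hC0, mul_comm]
          exact hB u hu
  -- final chain
  have hUR : (q : ℝ) ≤ 2 * (k+1) * (U.card : ℝ) := by exact_mod_cast hUcard
  have hrpow : (q:ℝ) ^ ((m:ℝ)/α + 1) = (q:ℝ) ^ ((m:ℝ)/α) * q :=
    Real.rpow_add_one (ne_of_gt hqR) _
  have hBpos : (0:ℝ) ≤ (q:ℝ) ^ ((m:ℝ)/α) := Real.rpow_nonneg (le_of_lt hqR) _
  calc 1 / (2 * (↑k+1) * C) * (q:ℝ) ^ ((m:ℝ)/α + 1)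
      = ((q:ℝ) ^ ((m:ℝ)/α) / C) * ((q:ℝ) / (2 * (k+1))) := by
        rw [hrpow]; field_simp
    _ ≤ ((q:ℝ) ^ ((m:ℝ)/α) / C) * (U.card : ℝ) := by
        apply mul_le_mul_of_nonneg_left _ (by positivity)
        rw [div_le_iff₀ (by positivity)]
        linarith [hUR]
    _ = (U.card : ℝ) * ((q:ℝ) ^ ((m:ℝ)/α) / C) := by ring
    _ ≤ ∑ u ∈ U, ((slice u).card : ℝ) := hsum
    _ = (T.card : ℝ) := by rw [hTcard]; push_cast; ring
    _ ≤ (Nat.card E : ℝ) := hTE
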